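/- Let Ω ⊆ ℝ^m with 0 ∉ Ω, and let h ∈ ℝ^m satisfy h·ω > 0 for every nonzero ω ∈ cl cone(Ω). Define the normalized set Ω' := {ω/(h·ω) : ω ∈ Ω}. Then {x ∈ ℝ^m : h·x = 1} ∩ cl cone(Ω) = cl conv(Ω'). -/
import Mathlib


noncomputable section

/-- The conical hull of a set: all finite nonnegative combinations of its elements. -/
def coneHull {E : Type*} [AddCommMonoid E] [Module ℝ E] (Ω : Set E) : Set E :=
  {y | ∃ (k : ℕ) (c : Fin k → ℝ) (v : Fin k → E),
    (∀ i, 0 ≤ c i) ∧ (∀ i, v i ∈ Ω) ∧ y = ∑ i, c i • v i}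

section Aux

variable {m : ℕ}

/-- The linear functional x ↦ ∑ h i * x i. -/
def Ff (h : Fin m → ℝ) : (Fin m → ℝ) →ₗ[ℝ] ℝ where
  toFun x := ∑ i, h i * x i
  map_add' x y := by
    simp [mul_add, Finset.sum_add_distrib]
  map_smul' c x := by
    simp only [Pi.smul_apply, smul_eq_mul, RingHom.id_apply, Finset.mul_sum]
    exact Finset.sum_congr rfl fun i _ => by ring

@[simp] lemma Ff_apply (h x : Fin m → ℝ) : Ff h x = ∑ i, h i * x i := rfl

lemma mem_coneHull_self {Ω : Set (Fin m → ℝ)} {ω} (hω : ω ∈ Ω) : ω ∈ coneHull Ω :=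
  ⟨1, fun _ => 1, fun _ => ω, fun _ => zero_le_one, fun _ => hω, by simp⟩

lemma coneHull_smul {Ω : Set (Fin m → ℝ)} {a : ℝ} (ha : 0 ≤ a) {y}
    (hy : y ∈ coneHull Ω) : a • y ∈ coneHull Ω := by
  obtain ⟨k, c, v, hc, hv, rfl⟩ := hy
  exact ⟨k, fun i => a * c i, v, fun i => mul_nonneg ha (hc i), hv, by
    rw [Finset.smul_sum]; exact Finset.sum_congr rfl fun i _ => by dsimp only; rw [smul_smul]⟩

lemma coneHull_add {Ω : Set (Fin m → ℝ)} {y z}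
    (hy : y ∈ coneHull Ω) (hz : z ∈ coneHull Ω) : y + z ∈ coneHull Ω := by
  obtain ⟨k, c, v, hc, hv, rfl⟩ := hy
  obtain ⟨l, d, w, hd, hw, rfl⟩ := hz
  refine ⟨k + l, Fin.append c d, Fin.append v w, ?_, ?_, ?_⟩
  · intro i
    refine Fin.addCases (fun i => ?_) (fun i => ?_) i
    · simpa using hc i
    · simpa using hd i
  · intro i
    refine Fin.addCases (fun i => ?_) (fun i => ?_) i
    · simpa using hv i
    · simpa using hw i
  · rw [Fin.sum_univ_add]
    simp

lemma coneHull_convex (Ω : Set (Fin m → ℝ)) : Convex ℝ (coneHull Ω) := by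
  intro x hx y hy a b ha hb _
  exact coneHull_add (coneHull_smul ha hx) (coneHull_smul hb hy)

lemma norm_mem_convexHull {Ω : Set (Fin m → ℝ)} {h : Fin m → ℝ}
    (hΩpos : ∀ v ∈ Ω, 0 < Ff h v) {y} (hy : y ∈ coneHull Ω) (hfy : 0 < Ff h y) :
    (Ff h y)⁻¹ • y ∈ convexHull ℝ ((fun ω => (Ff h ω)⁻¹ • ω) '' Ω) := by
  obtain ⟨k, c, v, hc, hv, rfl⟩ := hy
  have hsum : ∑ i, c i * Ff h (v i) = Ff h (∑ i, c i • v i) := by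
    rw [map_sum]
    exact Finset.sum_congr rfl fun i _ => by rw [map_smul, smul_eq_mul]
  have key := Finset.centerMass_mem_convexHull (Finset.univ : Finset (Fin k))
    (w := fun i => c i * Ff h (v i)) (z := fun i => (Ff h (v i))⁻¹ • v i)
    (s := (fun ω => (Ff h ω)⁻¹ • ω) '' Ω)
    (fun i _ => mul_nonneg (hc i) (hΩpos _ (hv i)).le)
    (by rw [hsum]; exact hfy)
    (fun i _ => ⟨v i, hv i, rfl⟩)
  rw [Finset.centerMass, hsum] at key
  convert key using 2
  refine (Finset.sum_congr rfl fun i _ => ?_).symm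
  rw [smul_smul, mul_assoc, mul_inv_cancel₀ (hΩpos _ (hv i)).ne', mul_one]

end Aux

/-- Claim: for Ω with 0 ∉ Ω and h strictly positive on nonzero points of cl cone(Ω),
the slice {x : h·x = 1} ∩ cl cone(Ω) equals cl conv(Ω'), where Ω' normalizes Ω. -/
theorem slice_eq_closure_convexHull {m : ℕ} (Ω : Set (Fin m → ℝ))
    (h0 : (0 : Fin m → ℝ) ∉ Ω) (h : Fin m → ℝ)
    (hpos : ∀ ω ∈ closure (coneHull Ω), ω ≠ 0 → 0 < ∑ i, h i * ω i) :
    {x : Fin m → ℝ | ∑ i, h i * x i = 1} ∩ closure (coneHull Ω) =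
      closure (convexHull ℝ ((fun ω => (∑ i, h i * ω i)⁻¹ • ω) '' Ω)) := by
  have hFcont : Continuous (Ff h) := (Ff h).continuous_of_finiteDimensional
  have hΩpos : ∀ v ∈ Ω, 0 < Ff h v := fun v hv =>
    hpos v (subset_closure (mem_coneHull_self hv)) (fun hv0 => h0 (hv0 ▸ hv))
  have himg : (fun ω => (∑ i, h i * ω i)⁻¹ • ω) '' Ω
      = (fun ω => (Ff h ω)⁻¹ • ω) '' Ω := rfl
  rw [himg]
  set Ω' := (fun ω => (Ff h ω)⁻¹ • ω) '' Ω with hΩ'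
  apply Set.Subset.antisymm
  · -- slice ∩ closure cone ⊆ closure conv Ω'
    rintro x ⟨hx1, hx2⟩
    have hx1 : Ff h x = 1 := hx1
    obtain ⟨u, hu, hulim⟩ := mem_closure_iff_seq_limit.mp hx2
    have hF : Filter.Tendsto (fun n => Ff h (u n)) Filter.atTop (nhds 1) := by
      rw [← hx1]
      exact (hFcont.tendsto x).comp hulim
    have hev : ∀ᶠ n in Filter.atTop, 0 < Ff h (u n) :=
      hF.eventually (eventually_gt_nhds one_pos)
    have hglim : Filter.Tendsto (fun n => (Ff h (u n))⁻¹ • u n) Filter.atTop (nhds x) := by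
      have : Filter.Tendsto (fun n => (Ff h (u n))⁻¹) Filter.atTop (nhds (1 : ℝ)⁻¹) :=
        hF.inv₀ one_ne_zero
      simpa using this.smul hulim
    refine mem_closure_of_tendsto hglim ?_
    filter_upwards [hev] with n hn
    exact norm_mem_convexHull hΩpos (hu n) hn
  · -- closure conv Ω' ⊆ slice ∩ closure cone
    have hsub : convexHull ℝ Ω' ⊆
        {x : Fin m → ℝ | ∑ i, h i * x i = 1} ∩ closure (coneHull Ω) := by
      apply convexHull_min
      · rintro _ ⟨ω, hω, rfl⟩
        refine ⟨?_, subset_closure (coneHull_smul (inv_nonneg.mpr (hΩpos ω hω).le)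
          (mem_coneHull_self hω))⟩
        show Ff h ((Ff h ω)⁻¹ • ω) = 1
        rw [map_smul, smul_eq_mul, inv_mul_cancel₀ (hΩpos ω hω).ne']
      · exact (convex_hyperplane (Ff h).isLinear 1).inter
          ((coneHull_convex Ω).closure)
    have hclosed : IsClosed ({x : Fin m → ℝ | ∑ i, h i * x i = 1} ∩ closure (coneHull Ω)) := by
      refine IsClosed.inter ?_ isClosed_closure
      exact isClosed_eq (by continuity) continuous_const
    exact hclosed.closure_subset_iff.mpr hsub
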